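/- The determinant of M equals 6, and the cokernel ℤ¹⁵ / M·ℤ¹⁵ of the linear map ℤ¹⁵ → ℤ¹⁵ given by M is isomorphic as an abelian group to ℤ/6ℤ. In particular the discriminant group of the lattice (ℤ¹⁵, M) is cyclic. -/

import Mathlib

open Matrix

def M : Matrix (Fin 15) (Fin 15) ℤ :=
  !![-2, 0, 0, 0, 0, 0, 1, 0, 1, 1, 0, 0, 0, 0, 0;
    0, -2, 0, 1, 0, 1, 0, 0, 0, 0, 0, 0, 0, 0, 1;
    0, 0, -2, 1, 1, 0, 0, 0, 0, 0, 0, 0, 0, 0, 0;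
    0, 1, 1, -2, 0, 0, 0, 0, 0, 0, 0, 0, 0, 0, 0;
    0, 0, 1, 0, -2, 0, 0, 0, 0, 0, 0, 0, 0, 0, 0;
    0, 1, 0, 0, 0, -2, 0, 0, 0, 0, 0, 0, 0, 0, 0;
    1, 0, 0, 0, 0, 0, -2, 0, 0, 0, 0, 0, 0, 0, 0;
    0, 0, 0, 0, 0, 0, 0, -2, 1, 0, 0, 0, 0, 0, 0;
    1, 0, 0, 0, 0, 0, 0, 1, -2, 0, 0, 0, 0, 0, 0;
    1, 0, 0, 0, 0, 0, 0, 0, 0, -2, 1, 0, 0, 0, 0;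
    0, 0, 0, 0, 0, 0, 0, 0, 0, 1, -2, 1, 0, 0, 0;
    0, 0, 0, 0, 0, 0, 0, 0, 0, 0, 1, -2, 1, 0, 0;
    0, 0, 0, 0, 0, 0, 0, 0, 0, 0, 0, 1, -2, 1, 0;
    0, 0, 0, 0, 0, 0, 0, 0, 0, 0, 0, 0, 1, -2, 1;
    0, 1, 0, 0, 0, 0, 0, 0, 0, 0, 0, 0, 0, 1, -2]

namespace Q17Aux

/-- Diagonal entries of the Smith normal form. -/
def dvec : Fin 15 → ℤ := fun i => if i = 14 then 6 else 1

/-- The Smith normal form diagonal matrix. -/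
def D : Matrix (Fin 15) (Fin 15) ℤ := Matrix.diagonal dvec

def U : Matrix (Fin 15) (Fin 15) ℤ :=
  !![1, 0, 0, 0, 0, 0, 0, 0, 0, 0, 0, 0, 0, 0, 0;
    0, 1, 0, 0, 0, 0, 0, 0, 0, 0, 0, 0, 0, 0, 0;
    0, -1, 1, 0, 0, 0, 0, 0, 0, 0, 0, 0, 0, 0, 0;
    0, 2, 0, 1, 0, 0, 0, 0, 0, 0, 0, 0, 0, 0, 0;
    0, 0, 0, 0, 0, 1, 0, 0, 0, 0, 0, 0, 0, 0, 0;
    0, 0, 0, 0, 0, 0, 0, 1, 0, 0, 0, 0, 0, 0, 0;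
    0, 0, 0, 0, 0, 0, 0, 2, 1, 0, 0, 0, 0, 0, 0;
    0, 0, 0, 0, 0, 0, 0, -2, -1, 1, 0, 0, 0, 0, 0;
    0, 0, 0, 0, 0, 0, 0, -4, -2, 2, 1, 0, 0, 0, 0;
    0, 0, 0, 0, 0, 0, 0, -6, -3, 3, 2, 1, 0, 0, 0;
    0, 0, 0, 0, 0, 0, 0, -8, -4, 4, 3, 2, 1, 0, 0;
    0, 0, 0, 0, 0, 0, 0, -10, -5, 5, 4, 3, 2, 1, 0;
    2, 0, 0, 0, 0, 0, 1, 4, 3, 0, 0, 0, 0, 0, 0;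
    -6, 0, 0, 0, 0, 1, -3, 0, -3, -6, -5, -4, -3, -2, -1;
    24, -4, -2, -3, -1, -5, 12, 8, 16, 20, 16, 12, 8, 4, 0]

def U' : Matrix (Fin 15) (Fin 15) ℤ :=
  !![1, 0, 0, 0, 0, 0, 0, 0, 0, 0, 0, 0, 0, 0, 0;
    0, 1, 0, 0, 0, 0, 0, 0, 0, 0, 0, 0, 0, 0, 0;
    0, 1, 1, 0, 0, 0, 0, 0, 0, 0, 0, 0, 0, 0, 0;
    0, -2, 0, 1, 0, 0, 0, 0, 0, 0, 0, 0, 0, 0, 0;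
    0, 0, -2, -3, -5, 0, 0, 0, 0, 0, 0, 4, 12, 0, -1;
    0, 0, 0, 0, 1, 0, 0, 0, 0, 0, 0, 0, 0, 0, 0;
    -2, 0, 0, 0, 0, 2, -3, 0, 0, 0, 0, 0, 1, 0, 0;
    0, 0, 0, 0, 0, 1, 0, 0, 0, 0, 0, 0, 0, 0, 0;
    0, 0, 0, 0, 0, -2, 1, 0, 0, 0, 0, 0, 0, 0, 0;
    0, 0, 0, 0, 0, 0, 1, 1, 0, 0, 0, 0, 0, 0, 0;
    0, 0, 0, 0, 0, 0, 0, -2, 1, 0, 0, 0, 0, 0, 0;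
    0, 0, 0, 0, 0, 0, 0, 1, -2, 1, 0, 0, 0, 0, 0;
    0, 0, 0, 0, 0, 0, 0, 0, 1, -2, 1, 0, 0, 0, 0;
    0, 0, 0, 0, 0, 0, 0, 0, 0, 1, -2, 1, 0, 0, 0;
    0, 0, 0, 0, 1, 0, 0, 0, 0, 0, 1, -2, -3, -1, 0]

def V : Matrix (Fin 15) (Fin 15) ℤ :=
  !![0, 0, 0, 0, 0, 0, 1, 0, 0, 0, 0, 0, 3, -6, -12;
    0, 0, 0, 0, 1, 0, 0, 0, 0, 0, 0, 0, 0, 0, 2;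
    0, 0, 0, 1, 3, 0, 0, 0, 0, 0, 0, -2, -6, 0, 4;
    0, 1, 0, 0, 2, 0, 0, 0, 0, 0, 0, -1, -3, 0, 3;
    0, 0, 1, 2, 4, 0, 0, 0, 0, 0, 0, -3, -9, 0, 5;
    0, 0, 0, 0, 0, 0, 0, 0, 0, 0, 0, 0, 0, 0, 1;
    1, 0, 0, 0, 0, -1, 2, 0, 0, 0, 0, 0, 1, -3, -6;
    0, 0, 0, 0, 0, 0, 0, 0, 0, 0, 0, 0, 1, -2, -4;
    0, 0, 0, 0, 0, 1, 0, 0, 0, 0, 0, 0, 2, -4, -8;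
    0, 0, 0, 0, 0, 0, 0, 0, 0, 0, 0, 0, 3, -5, -10;
    0, 0, 0, 0, 0, 0, 0, 1, 0, 0, 0, 0, 3, -4, -8;
    0, 0, 0, 0, 0, 0, 0, 0, 1, 0, 0, 0, 3, -3, -6;
    0, 0, 0, 0, 0, 0, 0, 0, 0, 1, 0, 0, 3, -2, -4;
    0, 0, 0, 0, 0, 0, 0, 0, 0, 0, 1, 0, 3, -1, -2;
    0, 0, 0, 0, 0, 0, 0, 0, 0, 0, 0, 1, 3, 0, 0]

def V' : Matrix (Fin 15) (Fin 15) ℤ :=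
  !![-2, 0, 0, 0, 0, 0, 1, 0, 1, 1, 0, 0, 0, 0, 0;
    0, -2, 0, 1, 0, 1, 0, 0, 0, 0, 0, 0, 0, 0, 1;
    0, 2, -2, 0, 1, -1, 0, 0, 0, 0, 0, 0, 0, 0, -1;
    0, -3, 1, 0, 0, 2, 0, 0, 0, 0, 0, 0, 0, 0, 2;
    0, 1, 0, 0, 0, -2, 0, 0, 0, 0, 0, 0, 0, 0, 0;
    0, 0, 0, 0, 0, 0, 0, -2, 1, 0, 0, 0, 0, 0, 0;
    1, 0, 0, 0, 0, 0, 0, -3, 0, 0, 0, 0, 0, 0, 0;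
    0, 0, 0, 0, 0, 0, 0, 3, 0, -2, 1, 0, 0, 0, 0;
    0, 0, 0, 0, 0, 0, 0, 6, 0, -3, 0, 1, 0, 0, 0;
    0, 0, 0, 0, 0, 0, 0, 9, 0, -4, 0, 0, 1, 0, 0;
    0, 0, 0, 0, 0, 0, 0, 12, 0, -5, 0, 0, 0, 1, 0;
    0, 0, 0, 0, 0, 0, 0, 15, 0, -6, 0, 0, 0, 0, 1;
    0, 0, 0, 0, 0, 0, 0, -5, 0, 2, 0, 0, 0, 0, 0;
    0, 0, 0, 0, 0, -2, 0, -3, 0, 1, 0, 0, 0, 0, 0;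
    0, 0, 0, 0, 0, 1, 0, 0, 0, 0, 0, 0, 0, 0, 0]

lemma hUMV : U * M * V = D := by decide
lemma hUU' : U * U' = 1 := by decide
lemma hVV' : V * V' = 1 := by decide
lemma hU'U : U' * U = 1 := by decide

def σ5 : Equiv.Perm (Fin 15) :=
  ⟨![5, 9, 3, 4, 6, 13, 12, 11, 0, 10, 2, 14, 8, 1, 7],
   ![8, 13, 10, 2, 3, 0, 4, 14, 12, 1, 9, 7, 6, 5, 11],
   by decide, by decide⟩

def L5 : Matrix (Fin 15) (Fin 15) (ZMod 5) :=
  !![3, 0, 0, 0, 0, 0, 0, 0, 0, 0, 0, 0, 0, 0, 0;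
    0, 3, 0, 0, 0, 0, 0, 0, 0, 0, 0, 0, 0, 0, 0;
    0, 0, 3, 0, 0, 0, 0, 0, 0, 0, 0, 0, 0, 0, 0;
    0, 0, 0, 3, 0, 0, 0, 0, 0, 0, 0, 0, 0, 0, 0;
    0, 0, 0, 0, 3, 0, 0, 0, 0, 0, 0, 0, 0, 0, 0;
    0, 0, 0, 0, 0, 3, 0, 0, 0, 0, 0, 0, 0, 0, 0;
    0, 0, 0, 0, 0, 1, 1, 0, 0, 0, 0, 0, 0, 0, 0;
    0, 0, 0, 0, 0, 0, 1, 2, 0, 0, 0, 0, 0, 0, 0;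
    0, 1, 0, 0, 1, 0, 0, 0, 4, 0, 0, 0, 0, 0, 0;
    0, 1, 0, 0, 0, 0, 0, 1, 3, 2, 0, 0, 0, 0, 0;
    0, 0, 1, 1, 0, 0, 0, 0, 0, 0, 4, 0, 0, 0, 0;
    0, 0, 0, 0, 0, 1, 3, 2, 0, 4, 0, 2, 0, 0, 0;
    0, 0, 0, 0, 0, 0, 0, 0, 1, 3, 0, 4, 4, 0, 0;
    1, 0, 1, 0, 0, 0, 0, 0, 0, 0, 3, 1, 3, 4, 0;
    0, 0, 0, 0, 0, 0, 0, 0, 0, 0, 0, 0, 1, 3, 3]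

def U5 : Matrix (Fin 15) (Fin 15) (ZMod 5) :=
  !![1, 0, 0, 0, 0, 0, 0, 0, 0, 0, 0, 0, 0, 2, 0;
    0, 1, 0, 0, 0, 0, 0, 0, 2, 2, 0, 0, 0, 0, 0;
    0, 0, 1, 0, 0, 0, 0, 0, 0, 0, 2, 0, 0, 2, 0;
    0, 0, 0, 1, 0, 0, 0, 0, 0, 0, 2, 0, 0, 0, 0;
    0, 0, 0, 0, 1, 0, 0, 0, 2, 0, 0, 0, 0, 0, 0;
    0, 0, 0, 0, 0, 1, 2, 0, 0, 0, 0, 2, 0, 0, 0;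
    0, 0, 0, 0, 0, 0, 1, 1, 0, 0, 0, 3, 0, 0, 0;
    0, 0, 0, 0, 0, 0, 0, 1, 0, 3, 0, 1, 0, 0, 0;
    0, 0, 0, 0, 0, 0, 0, 0, 1, 2, 0, 0, 4, 0, 0;
    0, 0, 0, 0, 0, 0, 0, 0, 0, 1, 0, 2, 4, 0, 0;
    0, 0, 0, 0, 0, 0, 0, 0, 0, 0, 1, 0, 0, 2, 0;
    0, 0, 0, 0, 0, 0, 0, 0, 0, 0, 0, 1, 2, 3, 0;
    0, 0, 0, 0, 0, 0, 0, 0, 0, 0, 0, 0, 1, 2, 4;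
    0, 0, 0, 0, 0, 0, 0, 0, 0, 0, 0, 0, 0, 1, 2;
    0, 0, 0, 0, 0, 0, 0, 0, 0, 0, 0, 0, 0, 0, 1]

lemma hLU5 : (M.map (⇑(Int.castRingHom (ZMod 5)))).submatrix σ5 σ5 = L5 * U5 := by decide

lemma hL5tri : L5.BlockTriangular OrderDual.toDual := by
  show ∀ i j : Fin 15, i.val < j.val → L5 i j = 0
  intro i; fin_cases i <;> decide

lemma hU5tri : U5.BlockTriangular id := by
  show ∀ i j : Fin 15, j.val < i.val → U5 i j = 0
  intro i; fin_cases i <;> decide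

lemma hdet5 : (Int.castRingHom (ZMod 5)) M.det = 1 := by
  rw [(Int.castRingHom (ZMod 5)).map_det, RingHom.mapMatrix_apply,
    ← Matrix.det_submatrix_equiv_self σ5, hLU5, Matrix.det_mul,
    Matrix.det_of_lowerTriangular L5 hL5tri, Matrix.det_of_upperTriangular hU5tri]
  decide

lemma hDtri : D.BlockTriangular id := by
  show ∀ i j : Fin 15, j.val < i.val → D i j = 0
  intro i; fin_cases i <;> decide

lemma hDdet : D.det = 6 := by
  rw [Matrix.det_of_upperTriangular hDtri]
  decide

lemma aux_detmul3 {n : Type*} [DecidableEq n] [Fintype n]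
    (A B C E : Matrix n n ℤ) (h : A * B * C = E) :
    A.det * B.det * C.det = E.det := by
  rw [← Matrix.det_mul, ← Matrix.det_mul, h]

lemma aux_unit {n : Type*} [DecidableEq n] [Fintype n]
    (A B : Matrix n n ℤ) (h : A * B = 1) : IsUnit A.det :=
  IsUnit.of_mul_eq_one B.det (by rw [← Matrix.det_mul, h, Matrix.det_one])

lemma hdetM : M.det = 6 := by
  have h6 : U.det * M.det * V.det = 6 := by
    rw [aux_detmul3 U M V D hUMV, hDdet]
  have hu : U.det = 1 ∨ U.det = -1 := Int.isUnit_iff.mp (aux_unit U U' hUU')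
  have hv : V.det = 1 ∨ V.det = -1 := Int.isUnit_iff.mp (aux_unit V V' hVV')
  have habs : M.det = 6 ∨ M.det = -6 := by
    rcases hu with h | h <;> rcases hv with h' | h' <;> rw [h, h'] at h6 <;> omega
  rcases habs with h | h
  · exact h
  · exfalso
    have h5 := hdet5
    rw [h, map_neg, map_ofNat] at h5
    exact absurd h5 (by decide)

/-- The quotient map onto `ZMod 6` given by the last coordinate. -/
def f : (Fin 15 → ℤ) →ₗ[ℤ] ZMod 6 :=
  (Int.castAddHom (ZMod 6)).toIntLinearMap.comp (LinearMap.proj (14 : Fin 15))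

lemma f_apply (v : Fin 15 → ℤ) : f v = ((v 14 : ℤ) : ZMod 6) := rfl

lemma hVsurj : Function.Surjective (Matrix.toLin' V) := fun y =>
  ⟨Matrix.toLin' V' y, by
    rw [← LinearMap.comp_apply, ← Matrix.toLin'_mul, hVV', Matrix.toLin'_one,
      LinearMap.id_apply]⟩

/-- Transport by the unimodular matrix `U`. -/
def eU : (Fin 15 → ℤ) ≃ₗ[ℤ] (Fin 15 → ℤ) :=
  LinearEquiv.ofLinear (Matrix.toLin' U) (Matrix.toLin' U')
    (by rw [← Matrix.toLin'_mul, hUU', Matrix.toLin'_one])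
    (by rw [← Matrix.toLin'_mul, hU'U, Matrix.toLin'_one])

lemma hmap : (LinearMap.range (Matrix.toLin' M)).map (eU : (Fin 15 → ℤ) →ₗ[ℤ] (Fin 15 → ℤ))
    = LinearMap.range (Matrix.toLin' D) := by
  have hD : Matrix.toLin' D
      = (Matrix.toLin' U).comp ((Matrix.toLin' M).comp (Matrix.toLin' V)) := by
    rw [← Matrix.toLin'_mul, ← Matrix.toLin'_mul, ← Matrix.mul_assoc, hUMV]
  rw [hD, LinearMap.range_comp, LinearMap.range_comp,
    LinearMap.range_eq_top.mpr hVsurj, Submodule.map_top]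
  rfl

lemma hker : LinearMap.range (Matrix.toLin' D) = LinearMap.ker f := by
  ext v
  constructor
  · rintro ⟨x, rfl⟩
    rw [LinearMap.mem_ker, f_apply, Matrix.toLin'_apply]
    unfold D
    rw [Matrix.mulVec_diagonal]
    show (((6 : ℤ) * x 14 : ℤ) : ZMod 6) = 0
    rw [Int.cast_mul, show ((6 : ℤ) : ZMod 6) = 0 from by decide, zero_mul]
  · intro hv
    rw [LinearMap.mem_ker, f_apply] at hv
    have h6 : (6 : ℤ) ∣ v 14 := by
      have := (ZMod.intCast_zmod_eq_zero_iff_dvd (v 14) 6).mp hv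
      exact_mod_cast this
    obtain ⟨c, hc⟩ := h6
    refine ⟨Function.update v 14 c, ?_⟩
    rw [Matrix.toLin'_apply]
    unfold D
    funext i
    rw [Matrix.mulVec_diagonal]
    by_cases h : i = 14
    · subst h
      simp [dvec, hc]
    · simp [dvec, h, Function.update_of_ne h]

lemma hfsurj : Function.Surjective f := by
  intro z
  obtain ⟨k, rfl⟩ := ZMod.intCast_surjective z
  exact ⟨Pi.single (14 : Fin 15) k, by simp [f_apply]⟩

/-- The cokernel of `D` is `ZMod 6`. -/
noncomputable def equivD : ((Fin 15 → ℤ) ⧸ LinearMap.range (Matrix.toLin' D)) ≃ₗ[ℤ] ZMod 6 :=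
  (Submodule.quotEquivOfEq _ _ hker).trans (f.quotKerEquivOfSurjective hfsurj)

/-- The cokernel of `M` is `ZMod 6`. -/
noncomputable def equivM : ((Fin 15 → ℤ) ⧸ LinearMap.range (Matrix.toLin' M)) ≃ₗ[ℤ] ZMod 6 :=
  (Submodule.Quotient.equiv _ _ eU hmap).trans equivD

end Q17Aux

theorem stmt_12 :
    M.det = 6 ∧
    Nonempty (((Fin 15 → ℤ) ⧸ LinearMap.range (Matrix.toLin' M)) ≃+ ZMod 6) := by
  exact ⟨Q17Aux.hdetM, ⟨Q17Aux.equivM.toAddEquiv⟩⟩
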